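/- Let P and Q be orthogonal projections (Hermitian idempotent matrices) on ℂ^D with s := ‖P − Q‖ < 1, where ‖·‖ is the operator norm. Then there exists a unitary matrix U on ℂ^D such that U P U† = Q and ‖U − I‖ ≤ √2 · s. -/

import Mathlib

open Matrix

noncomputable def opNorm {m n : Type*} [Fintype m] [Fintype n] [DecidableEq n]
    (A : Matrix m n ℂ) : ℝ :=
  ‖LinearMap.toContinuousLinearMap (Matrix.toEuclideanLin A)‖

section Abstract

variable {A : Type*} [CStarAlgebra A] [PartialOrder A] [StarOrderedRing A]

/-- Conjugation by a selfadjoint involution, as a star algebra homomorphism. -/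
noncomputable def conjHom (v : A) (hv : star v = v) (hv2 : v * v = 1) : A →⋆ₐ[ℂ] A where
  toFun x := v * x * v
  map_one' := by show v * 1 * v = 1; rw [mul_one, hv2]
  map_mul' x y := by
    show v * (x * y) * v = v * x * v * (v * y * v)
    have h : v * x * v * (v * y * v) = v * x * (v * v) * y * v := by
      simp only [mul_assoc]
    rw [h, hv2, mul_one, mul_assoc v x y]
  map_zero' := by simp
  map_add' x y := by simp [mul_add, add_mul]
  commutes' r := by
    simp [Algebra.algebraMap_eq_smul_one, mul_smul_comm, smul_mul_assoc, hv2]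
  map_star' x := by simp [StarMul.star_mul, hv, mul_assoc]

lemma commute_cfc_of_commute (f : ℝ → ℝ) (a v : A) (ha : _root_.IsSelfAdjoint a)
    (hv : star v = v) (hv2 : v * v = 1) (hcomm : v * a = a * v) :
    v * cfc f a = cfc f a * v := by
  by_cases hf : ContinuousOn f (spectrum ℝ a)
  · haveI : CompactSpace (spectrum ℝ a) :=
      isCompact_iff_compactSpace.mp (spectrum.isCompact a)
    have hva : v * a * v = a := by rw [hcomm, mul_assoc, hv2, mul_one]
    have key := StarAlgHom.map_cfc (conjHom v hv hv2) f a hf ?_ ha ?_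
    · have h2 : v * cfc f a * v = cfc f a := by
        simpa [conjHom, hva] using key
      calc v * cfc f a = v * cfc f a * (v * v) := by rw [hv2, mul_one]
        _ = (v * cfc f a * v) * v := by simp only [mul_assoc]
        _ = cfc f a * v := by rw [h2]
    · show Continuous fun x => v * x * v
      fun_prop
    · show _root_.IsSelfAdjoint (v * a * v)
      rw [hva]; exact ha
  · rw [cfc_apply_of_not_continuousOn a hf, mul_zero, zero_mul]

/-- Sz.-Nagy: a unitary intertwining two close projections in a C⋆-algebra. -/
theorem szNagy (p q : A) (hp : star p = p) (hp2 : p * p = p)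
    (hq : star q = q) (hq2 : q * q = q) (hclose : ‖p - q‖ < 1) :
    ∃ u : A, star u * u = 1 ∧ u * star u = 1 ∧ u * p * star u = q ∧
      ‖u - 1‖ ≤ Real.sqrt 2 * ‖p - q‖ := by
  rcases subsingleton_or_nontrivial A with hA | hA
  · refine ⟨1, Subsingleton.elim _ _, Subsingleton.elim _ _, Subsingleton.elim _ _, ?_⟩
    have : ((1 : A) - 1) = 0 := by simp
    rw [this, norm_zero]
    positivity
  -- basic notation
  set s : ℝ := ‖p - q‖ with hs_def
  have hs0 : 0 ≤ s := norm_nonneg _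
  have hss : s * s < 1 := by nlinarith
  have hp2' : ∀ z : A, p * (p * z) = p * z := fun z => by rw [← mul_assoc, hp2]
  have hq2' : ∀ z : A, q * (q * z) = q * z := fun z => by rw [← mul_assoc, hq2]
  set t : A := p - q with ht_def
  have ht : _root_.IsSelfAdjoint t := isSelfAdjoint_iff.mpr (by rw [star_sub, hp, hq])
  set a : A := t * t with ha_def
  have ha : _root_.IsSelfAdjoint a :=
    isSelfAdjoint_iff.mpr (by rw [StarMul.star_mul, ht.star_eq])
  have ha_nonneg : (0 : A) ≤ a := by
    have := star_mul_self_nonneg t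
    rwa [ht.star_eq] at this
  have hnorma : ‖a‖ = s * s := by
    rw [ha_def]
    nth_rewrite 1 [← ht.star_eq]
    exact CStarRing.norm_star_mul_self (x := t)
  have hspec : ∀ x ∈ spectrum ℝ a, 0 ≤ x ∧ x ≤ s * s := by
    intro x hx
    refine ⟨spectrum_nonneg_of_nonneg ha_nonneg hx, ?_⟩
    have h1 : ‖x‖ ≤ ‖a‖ := spectrum.norm_le_norm_of_mem hx
    rw [Real.norm_eq_abs, hnorma] at h1
    exact (le_abs_self x).trans h1
  -- algebraic identities
  have ha_eq : a = p + q - p * q - q * p := by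
    rw [ha_def, ht_def]
    simp only [mul_sub, sub_mul, mul_add, add_mul, mul_one, one_mul, mul_assoc,
      hp2, hq2, hp2', hq2']
    abel
  have hpa : p * a = a * p := by
    rw [ha_eq]
    simp only [mul_sub, sub_mul, mul_add, add_mul, mul_one, one_mul, mul_assoc,
      hp2, hq2, hp2', hq2']
    abel
  have hqa : q * a = a * q := by
    rw [ha_eq]
    simp only [mul_sub, sub_mul, mul_add, add_mul, mul_one, one_mul, mul_assoc,
      hp2, hq2, hp2', hq2']
    abel
  set x : A := q * p + (1 - q) * (1 - p) with hx_def
  set y : A := p * q + (1 - p) * (1 - q) with hy_def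
  have hxstar : star x = y := by
    rw [hx_def, hy_def]
    simp [star_add, StarMul.star_mul, star_sub, star_one, hp, hq]
  have hyx : y * x = 1 - a := by
    rw [hx_def, hy_def, ha_eq]
    simp only [mul_sub, sub_mul, mul_add, add_mul, mul_one, one_mul, mul_assoc,
      hp2, hq2, hp2', hq2']
    abel
  have hxy : x * y = 1 - a := by
    rw [hx_def, hy_def, ha_eq]
    simp only [mul_sub, sub_mul, mul_add, add_mul, mul_one, one_mul, mul_assoc,
      hp2, hq2, hp2', hq2']
    abel
  have hxp : x * p = q * x := by
    rw [hx_def]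
    simp only [mul_sub, sub_mul, mul_add, add_mul, mul_one, one_mul, mul_assoc,
      hp2, hq2, hp2', hq2']
    abel
  have hxysum : x + y = (1 - a) + (1 - a) := by
    rw [hx_def, hy_def, ha_eq]
    simp only [mul_sub, sub_mul, mul_add, add_mul, mul_one, one_mul, mul_assoc,
      hp2, hq2, hp2', hq2']
    abel
  -- the square root r of 1 - a
  set g : ℝ → ℝ := fun z => Real.sqrt (1 - z) with hg_def
  have hgcont : Continuous g := by
    rw [hg_def]; fun_prop
  set r : A := cfc g a with hr_def
  have hr_sa : _root_.IsSelfAdjoint r := cfc_predicate g a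
  have hrr : r * r = 1 - a := by
    rw [hr_def, ← cfc_mul g g a]
    have h1 : cfc (fun z => g z * g z) a = cfc (fun z : ℝ => 1 - z) a := by
      refine cfc_congr fun z hz => ?_
      have hz' := hspec z hz
      rw [hg_def]
      exact Real.mul_self_sqrt (by linarith [hz'.2, hss])
    rw [h1, cfc_sub (fun _ => (1:ℝ)) (fun z => z) a, cfc_const_one ℝ a, cfc_id' ℝ a]
  -- invertibility of 1 - a and of r
  have hnorm_lt : ‖a‖ < 1 := by rw [hnorma]; exact hss
  set cu : Aˣ := Units.oneSub a hnorm_lt with hcu_def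
  have hcu_val : (cu : A) = 1 - a := rfl
  have hcomm_r_c : r * (cu : A) = (cu : A) * r := by
    rw [hcu_val, ← hrr]
    simp only [mul_assoc]
  set r' : A := (cu⁻¹ : Aˣ) * r with hr'_def
  have hr'r : r' * r = 1 := by
    rw [hr'_def, mul_assoc, hrr, ← hcu_val]
    exact Units.inv_mul cu
  have hcomm_inv : r * ((cu⁻¹ : Aˣ) : A) = ((cu⁻¹ : Aˣ) : A) * r := by
    calc r * ((cu⁻¹ : Aˣ) : A)
        = ((cu⁻¹ : Aˣ) : A) * ((cu : A) * (r * ((cu⁻¹ : Aˣ) : A))) := by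
          rw [← mul_assoc, Units.inv_mul, one_mul]
      _ = ((cu⁻¹ : Aˣ) : A) * (((cu : A) * r) * ((cu⁻¹ : Aˣ) : A)) := by
          simp only [mul_assoc]
      _ = ((cu⁻¹ : Aˣ) : A) * ((r * (cu : A)) * ((cu⁻¹ : Aˣ) : A)) := by
          rw [hcomm_r_c]
      _ = ((cu⁻¹ : Aˣ) : A) * (r * ((cu : A) * ((cu⁻¹ : Aˣ) : A))) := by
          simp only [mul_assoc]
      _ = ((cu⁻¹ : Aˣ) : A) * r := by rw [Units.mul_inv, mul_one]
  have hrr' : r * r' = 1 := by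
    rw [hr'_def, ← mul_assoc, hcomm_inv, mul_assoc, hrr, ← hcu_val]
    exact Units.inv_mul cu
  have hstar_r' : star r' = r' := by
    have h1 : star r' * r = 1 := by
      have := congrArg star hrr'
      rwa [StarMul.star_mul, hr_sa.star_eq, star_one] at this
    calc star r' = star r' * (r * r') := by rw [hrr', mul_one]
      _ = (star r' * r) * r' := by rw [mul_assoc]
      _ = r' := by rw [h1, one_mul]
  -- commutation of r and r' with p, q
  have hcomm_pr : p * r = r * p := by
    have hv : star (1 - p - p) = 1 - p - p := by rw [star_sub, star_sub, star_one, hp]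
    have hv2 : (1 - p - p) * (1 - p - p) = 1 := by
      simp only [mul_sub, sub_mul, mul_one, one_mul, hp2]
      abel
    have hva : (1 - p - p) * a = a * (1 - p - p) := by
      simp only [mul_sub, sub_mul, mul_one, one_mul, hpa]
    have h := commute_cfc_of_commute g a (1 - p - p) ha hv hv2 hva
    rw [← hr_def] at h
    have h2 : r - p * r - p * r = r - r * p - r * p := by
      have h3 : (1 - p - p) * r = r - p * r - p * r := by
        simp only [sub_mul, one_mul]
      have h4 : r * (1 - p - p) = r - r * p - r * p := by
        simp only [mul_sub, mul_one]
      rw [← h3, ← h4, h]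
    have h5 : p * r + p * r = r * p + r * p := by
      rw [sub_sub, sub_sub] at h2
      exact sub_right_injective h2
    have h6 : (2 : ℝ) • (p * r) = (2 : ℝ) • (r * p) := by
      rw [two_smul, two_smul]
      exact_mod_cast h5
    have := congrArg (fun z => ((2 : ℝ)⁻¹) • z) h6
    simpa [smul_smul] using this
  have hcomm_qr : q * r = r * q := by
    have hv : star (1 - q - q) = 1 - q - q := by rw [star_sub, star_sub, star_one, hq]
    have hv2 : (1 - q - q) * (1 - q - q) = 1 := by
      simp only [mul_sub, sub_mul, mul_one, one_mul, hq2]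
      abel
    have hva : (1 - q - q) * a = a * (1 - q - q) := by
      simp only [mul_sub, sub_mul, mul_one, one_mul, hqa]
    have h := commute_cfc_of_commute g a (1 - q - q) ha hv hv2 hva
    rw [← hr_def] at h
    have h2 : r - q * r - q * r = r - r * q - r * q := by
      have h3 : (1 - q - q) * r = r - q * r - q * r := by
        simp only [sub_mul, one_mul]
      have h4 : r * (1 - q - q) = r - r * q - r * q := by
        simp only [mul_sub, mul_one]
      rw [← h3, ← h4, h]
    have h5 : q * r + q * r = r * q + r * q := by
      rw [sub_sub, sub_sub] at h2
      exact sub_right_injective h2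
    have h6 : (2 : ℝ) • (q * r) = (2 : ℝ) • (r * q) := by
      rw [two_smul, two_smul]
      exact_mod_cast h5
    have := congrArg (fun z => ((2 : ℝ)⁻¹) • z) h6
    simpa [smul_smul] using this
  have hcomm_pr' : p * r' = r' * p := by
    calc p * r' = (r' * r) * (p * r') := by rw [hr'r, one_mul]
      _ = r' * (r * p) * r' := by simp only [mul_assoc]
      _ = r' * (p * r) * r' := by rw [hcomm_pr]
      _ = r' * p * (r * r') := by simp only [mul_assoc]
      _ = r' * p := by rw [hrr', mul_one]
  have hcomm_qr' : q * r' = r' * q := by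
    calc q * r' = (r' * r) * (q * r') := by rw [hr'r, one_mul]
      _ = r' * (r * q) * r' := by simp only [mul_assoc]
      _ = r' * (q * r) * r' := by rw [hcomm_qr]
      _ = r' * q * (r * r') := by simp only [mul_assoc]
      _ = r' * q := by rw [hrr', mul_one]
  -- x and y commute with r'
  have hcx : Commute r' x := by
    have cp : Commute r' p := (hcomm_pr'.symm)
    have cq : Commute r' q := (hcomm_qr'.symm)
    exact ((cq.mul_right cp).add_right
      (((Commute.one_right r').sub_right cq).mul_right
        ((Commute.one_right r').sub_right cp)))
  have hcy : Commute r' y := by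
    have cp : Commute r' p := (hcomm_pr'.symm)
    have cq : Commute r' q := (hcomm_qr'.symm)
    exact ((cp.mul_right cq).add_right
      (((Commute.one_right r').sub_right cp).mul_right
        ((Commute.one_right r').sub_right cq)))
  -- the unitary u = x * r'
  set u : A := x * r' with hu_def
  have hstaru : star u = y * r' := by
    rw [hu_def, StarMul.star_mul, hstar_r', hxstar, hcy.eq]
  have h1 : star u * u = 1 := by
    rw [hstaru, hu_def]
    calc y * r' * (x * r') = y * (r' * x) * r' := by simp only [mul_assoc]
      _ = y * (x * r') * r' := by rw [hcx.eq]
      _ = (y * x) * (r' * r') := by simp only [mul_assoc]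
      _ = (r * r) * (r' * r') := by rw [hyx, hrr]
      _ = r * (r * r') * r' := by simp only [mul_assoc]
      _ = 1 := by rw [hrr', mul_one, hrr']
  have h2 : u * star u = 1 := by
    rw [hstaru, hu_def]
    calc x * r' * (y * r') = x * (r' * y) * r' := by simp only [mul_assoc]
      _ = x * (y * r') * r' := by rw [hcy.eq]
      _ = (x * y) * (r' * r') := by simp only [mul_assoc]
      _ = (r * r) * (r' * r') := by rw [hxy, hrr]
      _ = r * (r * r') * r' := by simp only [mul_assoc]
      _ = 1 := by rw [hrr', mul_one, hrr']
  have h3 : u * p * star u = q := by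
    rw [hstaru, hu_def]
    calc x * r' * p * (y * r') = x * (r' * p) * (y * r') := by simp only [mul_assoc]
      _ = x * (p * r') * (y * r') := by rw [hcomm_pr']
      _ = (x * p) * (r' * (y * r')) := by simp only [mul_assoc]
      _ = (q * x) * (r' * (y * r')) := by rw [hxp]
      _ = q * (x * r' * (y * r')) := by simp only [mul_assoc]
      _ = q * 1 := by rw [← hu_def, ← hstaru, h2]
      _ = q := mul_one q
  have husum : u + star u = r + r := by
    rw [hstaru, hu_def]
    calc x * r' + y * r' = (x + y) * r' := (add_mul x y r').symm
      _ = ((1 - a) + (1 - a)) * r' := by rw [hxysum]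
      _ = (1 - a) * r' + (1 - a) * r' := add_mul _ _ _
      _ = (r * r) * r' + (r * r) * r' := by rw [hrr]
      _ = r * (r * r') + r * (r * r') := by simp only [mul_assoc]
      _ = r + r := by rw [hrr', mul_one]
  have hwsq : star (u - 1) * (u - 1) = (1 - r) + (1 - r) := by
    have hexp : star (u - 1) * (u - 1) = star u * u - star u - u + 1 := by
      rw [star_sub, star_one]
      simp only [sub_mul, mul_sub, one_mul, mul_one]
      abel
    rw [hexp, h1]
    have : (1 : A) - star u - u + 1 = (1 + 1) - (u + star u) := by abel
    rw [this, husum]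
    abel
  have hnorm1r : ‖(1 : A) - r‖ ≤ s * s := by
    have h1r : (1 : A) - r = cfc (fun z : ℝ => 1 - g z) a := by
      rw [hr_def, cfc_sub (fun _ => (1 : ℝ)) g a, cfc_const_one ℝ a]
    rw [h1r]
    refine norm_cfc_le (mul_self_nonneg s) fun z hz => ?_
    obtain ⟨hz0, hz1⟩ := hspec z hz
    have hz2 : z < 1 := lt_of_le_of_lt hz1 hss
    have hsq : Real.sqrt (1 - z) ^ 2 = 1 - z := Real.sq_sqrt (by linarith)
    have hle1 : Real.sqrt (1 - z) ≤ 1 := Real.sqrt_le_one.mpr (by linarith)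
    have hge : 1 - z ≤ Real.sqrt (1 - z) := by nlinarith [Real.sqrt_nonneg (1 - z)]
    rw [hg_def, Real.norm_eq_abs, abs_of_nonneg (by linarith)]
    linarith
  have hfinal : ‖u - 1‖ * ‖u - 1‖ ≤ 2 * (s * s) := by
    have he : ‖star (u - 1) * (u - 1)‖ = ‖u - 1‖ * ‖u - 1‖ :=
      CStarRing.norm_star_mul_self (x := u - 1)
    rw [← he, hwsq]
    calc ‖(1 - r) + (1 - r)‖ ≤ ‖(1 : A) - r‖ + ‖(1 : A) - r‖ := norm_add_le _ _
      _ ≤ s * s + s * s := add_le_add hnorm1r hnorm1r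
      _ = 2 * (s * s) := by ring
  refine ⟨u, h1, h2, h3, ?_⟩
  calc ‖u - 1‖ = Real.sqrt (‖u - 1‖ * ‖u - 1‖) := (Real.sqrt_mul_self (norm_nonneg _)).symm
    _ ≤ Real.sqrt (2 * (s * s)) := Real.sqrt_le_sqrt hfinal
    _ = Real.sqrt 2 * s := by
        rw [Real.sqrt_mul (by norm_num : (0 : ℝ) ≤ 2), Real.sqrt_mul_self hs0]

end Abstract

lemma opNorm_eq_norm_toEuclideanCLM {D : ℕ} (M : Matrix (Fin D) (Fin D) ℂ) :
    opNorm M = ‖Matrix.toEuclideanCLM (𝕜 := ℂ) (n := Fin D) M‖ := by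
  have h : LinearMap.toContinuousLinearMap (Matrix.toEuclideanLin M)
      = Matrix.toEuclideanCLM (𝕜 := ℂ) (n := Fin D) M := by
    apply ContinuousLinearMap.coe_injective
    rw [Matrix.coe_toEuclideanCLM_eq_toEuclideanLin]
    exact LinearMap.coe_toContinuousLinearMap _
  rw [opNorm, h]

set_option maxHeartbeats 1000000 in
/-- If `P, Q` are orthogonal projections with `‖P - Q‖ < 1`, then there is a unitary `U`
with `U P U† = Q` and `‖U - I‖ ≤ √2 ‖P - Q‖` (the Jordan's-lemma step inside the proof
of the composition lemma). -/
theorem unitary_conjugating_close_projections {D : ℕ}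
    (P Q : Matrix (Fin D) (Fin D) ℂ)
    (hP : Pᴴ = P) (hP2 : P * P = P)
    (hQ : Qᴴ = Q) (hQ2 : Q * Q = Q)
    (hclose : opNorm (P - Q) < 1) :
    ∃ U : Matrix (Fin D) (Fin D) ℂ,
      Uᴴ * U = 1 ∧ U * Uᴴ = 1 ∧
      U * P * Uᴴ = Q ∧
      opNorm (U - 1) ≤ Real.sqrt 2 * opNorm (P - Q) := by
  set e := Matrix.toEuclideanCLM (𝕜 := ℂ) (n := Fin D) with he_def
  have hstar : ∀ M : Matrix (Fin D) (Fin D) ℂ, star (e M) = e Mᴴ := by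
    intro M
    rw [← map_star]
    rfl
  have hp : star (e P) = e P := by rw [hstar, hP]
  have hq : star (e Q) = e Q := by rw [hstar, hQ]
  have hp2 : e P * e P = e P := by rw [← _root_.map_mul, hP2]
  have hq2 : e Q * e Q = e Q := by rw [← _root_.map_mul, hQ2]
  have hclose' : ‖e P - e Q‖ < 1 := by
    rw [← _root_.map_sub, ← opNorm_eq_norm_toEuclideanCLM]
    exact hclose
  obtain ⟨u, hu1, hu2, hu3, hu4⟩ := szNagy (e P) (e Q) hp hp2 hq hq2 hclose'
  refine ⟨e.symm u, ?_, ?_, ?_, ?_⟩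
  · have : (e.symm u)ᴴ = e.symm (star u) := by
      rw [← Matrix.star_eq_conjTranspose]
      exact (map_star e.symm u).symm
    rw [this, ← _root_.map_mul, hu1, _root_.map_one]
  · have : (e.symm u)ᴴ = e.symm (star u) := by
      rw [← Matrix.star_eq_conjTranspose]
      exact (map_star e.symm u).symm
    rw [this, ← _root_.map_mul, hu2, _root_.map_one]
  · have h1 : (e.symm u)ᴴ = e.symm (star u) := by
      rw [← Matrix.star_eq_conjTranspose]
      exact (map_star e.symm u).symm
    have h2 : P = e.symm (e P) := (StarAlgEquiv.symm_apply_apply e P).symm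
    rw [h1, h2, ← _root_.map_mul, ← _root_.map_mul, hu3]
    exact StarAlgEquiv.symm_apply_apply e Q
  · have h1 : opNorm (e.symm u - 1) = ‖u - 1‖ := by
      rw [opNorm_eq_norm_toEuclideanCLM, _root_.map_sub, _root_.map_one, StarAlgEquiv.apply_symm_apply]
    have h2 : opNorm (P - Q) = ‖e P - e Q‖ := by
      rw [opNorm_eq_norm_toEuclideanCLM, _root_.map_sub]
    rw [h1, h2]
    exact hu4
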